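/- Let ρ be a critical radius function on ℝ^d with constant k₀ and associated Agmon balls B_ρ(x,r). There exists a constant C > 0 such that for all x ∈ ℝ^d and r > 0, the Lebesgue measure satisfies |B_ρ(x, 2r)| ≤ C (1 + r)^{(k₀+1)d} |B_ρ(x, r)|. -/

import Mathlib

open MeasureTheory Metric Set

open scoped RealInnerProductSpace

noncomputable section

/-- A critical radius function with constants `B₀, k₀`. -/
def IsCRF {d : ℕ} (ρ : EuclideanSpace ℝ (Fin d) → ℝ) (B₀ k₀ : ℝ) : Prop :=
  (∀ x, 0 < ρ x) ∧ ∀ x y : EuclideanSpace ℝ (Fin d),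
    B₀⁻¹ * ρ x * (1 + dist x y / ρ x) ^ (-k₀) ≤ ρ y ∧
    ρ y ≤ B₀ * ρ x * (1 + dist x y / ρ x) ^ (k₀ / (k₀ + 1))

/-- The Agmon distance associated to `ρ`. -/
def agmonDist {d : ℕ} (ρ : EuclideanSpace ℝ (Fin d) → ℝ)
    (x y : EuclideanSpace ℝ (Fin d)) : ℝ :=
  sInf { L : ℝ | ∃ γ : ℝ → EuclideanSpace ℝ (Fin d), ContDiff ℝ 1 γ ∧ γ 0 = x ∧ γ 1 = y ∧
    L = ∫ t in (0:ℝ)..1, (ρ (γ t))⁻¹ * ‖deriv γ t‖ }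

/-- The Agmon ball `B_ρ(x,r)`. -/
def agmonBall {d : ℕ} (ρ : EuclideanSpace ℝ (Fin d) → ℝ)
    (x : EuclideanSpace ℝ (Fin d)) (r : ℝ) : Set (EuclideanSpace ℝ (Fin d)) :=
  { y | agmonDist ρ x y < r }

namespace AgmonAux

variable {d : ℕ}

def agmonSet (ρ : EuclideanSpace ℝ (Fin d) → ℝ) (x y : EuclideanSpace ℝ (Fin d)) : Set ℝ :=
  { L : ℝ | ∃ γ : ℝ → EuclideanSpace ℝ (Fin d), ContDiff ℝ 1 γ ∧ γ 0 = x ∧ γ 1 = y ∧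
    L = ∫ t in (0:ℝ)..1, (ρ (γ t))⁻¹ * ‖deriv γ t‖ }

lemma agmonDist_def (ρ : EuclideanSpace ℝ (Fin d) → ℝ) (x y : EuclideanSpace ℝ (Fin d)) :
    agmonDist ρ x y = sInf (agmonSet ρ x y) := rfl

def seg (x y : EuclideanSpace ℝ (Fin d)) : ℝ → EuclideanSpace ℝ (Fin d) :=
  fun t => x + t • (y - x)

lemma seg_contDiff (x y : EuclideanSpace ℝ (Fin d)) : ContDiff ℝ 1 (seg x y) :=
  contDiff_const.add (contDiff_id.smul contDiff_const)

lemma seg_hasDerivAt (x y : EuclideanSpace ℝ (Fin d)) (t : ℝ) :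
    HasDerivAt (seg x y) (y - x) t := by
  have h : HasDerivAt (fun t : ℝ => t • (y - x)) ((1:ℝ) • (y - x)) t :=
    (hasDerivAt_id t).smul_const (y - x)
  have h2 := h.const_add x
  rw [one_smul] at h2
  exact h2

lemma seg_deriv (x y : EuclideanSpace ℝ (Fin d)) (t : ℝ) :
    deriv (seg x y) t = y - x := (seg_hasDerivAt x y t).deriv

lemma agmonSet_nonempty (ρ : EuclideanSpace ℝ (Fin d) → ℝ) (x y : EuclideanSpace ℝ (Fin d)) :
    (agmonSet ρ x y).Nonempty :=
  ⟨_, seg x y, seg_contDiff x y, by simp [seg], by simp [seg], rfl⟩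

lemma agmonSet_nonneg {ρ : EuclideanSpace ℝ (Fin d) → ℝ} (hρ : ∀ z, 0 < ρ z)
    {x y : EuclideanSpace ℝ (Fin d)} {L : ℝ} (hL : L ∈ agmonSet ρ x y) : 0 ≤ L := by
  obtain ⟨γ, -, -, -, rfl⟩ := hL
  apply intervalIntegral.integral_nonneg (by norm_num)
  intro u _
  exact mul_nonneg (inv_nonneg.2 (hρ _).le) (norm_nonneg _)

lemma agmonSet_bddBelow {ρ : EuclideanSpace ℝ (Fin d) → ℝ} (hρ : ∀ z, 0 < ρ z)
    (x y : EuclideanSpace ℝ (Fin d)) : BddBelow (agmonSet ρ x y) :=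
  ⟨0, fun _ hL => agmonSet_nonneg hρ hL⟩

/-- Upper bound on the Agmon distance of nearby points, via the straight segment. -/
lemma agmonDist_le_of_close {ρ : EuclideanSpace ℝ (Fin d) → ℝ} {B₀ k₀ : ℝ}
    (hB₀ : 1 < B₀) (hk₀ : 1 < k₀) (hρ : IsCRF ρ B₀ k₀)
    (x y : EuclideanSpace ℝ (Fin d)) (hd : dist x y ≤ ρ x) :
    agmonDist ρ x y ≤ B₀ * 2 ^ k₀ * (dist x y / ρ x) := by
  obtain ⟨hρpos, hρbd⟩ := hρ
  have hx : 0 < ρ x := hρpos x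
  rw [agmonDist_def]
  have hmem : (∫ t in (0:ℝ)..1, (ρ (seg x y t))⁻¹ * ‖deriv (seg x y) t‖) ∈ agmonSet ρ x y :=
    ⟨seg x y, seg_contDiff x y, by simp [seg], by simp [seg], rfl⟩
  refine (csInf_le (agmonSet_bddBelow hρpos x y) hmem).trans ?_
  set C : ℝ := B₀ * 2 ^ k₀ * (dist x y / ρ x) with hC
  have h2k : (0:ℝ) < 2 ^ k₀ := Real.rpow_pos_of_pos (by norm_num) _
  have hbound : ∀ t ∈ Set.uIoc (0:ℝ) 1, ‖(ρ (seg x y t))⁻¹ * ‖deriv (seg x y) t‖‖ ≤ C := by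
    intro t ht
    rw [Set.uIoc_of_le (by norm_num : (0:ℝ) ≤ 1)] at ht
    have hdz : dist x (seg x y t) ≤ dist x y := by
      have hxy : dist x y = ‖y - x‖ := by rw [dist_eq_norm, norm_sub_rev]
      rw [seg, dist_self_add_right, norm_smul, hxy]
      calc ‖t‖ * ‖y - x‖ ≤ 1 * ‖y - x‖ := by
            apply mul_le_mul_of_nonneg_right _ (norm_nonneg _)
            rw [Real.norm_eq_abs, abs_le]; exact ⟨by linarith [ht.1.le], ht.2⟩
        _ = ‖y - x‖ := one_mul _
    set z := seg x y t with hz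
    have hzx : 0 < ρ z := hρpos z
    have hdiv : dist x z / ρ x ≤ 1 := by
      rw [div_le_one hx]; exact hdz.trans hd
    have hb1 : (1:ℝ) ≤ 1 + dist x z / ρ x := by
      have := div_nonneg (dist_nonneg (x := x) (y := z)) hx.le; linarith
    have hb2 : 1 + dist x z / ρ x ≤ 2 := by linarith
    have hpow : (2:ℝ) ^ (-k₀) ≤ (1 + dist x z / ρ x) ^ (-k₀) := by
      rw [Real.rpow_neg (by norm_num), Real.rpow_neg (by linarith)]
      apply inv_anti₀ (Real.rpow_pos_of_pos (by linarith) _)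
      exact Real.rpow_le_rpow (by linarith) hb2 (by linarith)
    have hlow : B₀⁻¹ * ρ x * 2 ^ (-k₀) ≤ ρ z := by
      refine le_trans ?_ (hρbd x z).1
      exact mul_le_mul_of_nonneg_left hpow (by positivity)
    have hinv : (ρ z)⁻¹ ≤ B₀ * 2 ^ k₀ / ρ x := by
      have h0 : (0:ℝ) < B₀⁻¹ * ρ x * 2 ^ (-k₀) := by positivity
      have h1 := inv_anti₀ h0 hlow
      have hre : (B₀⁻¹ * ρ x * (2:ℝ) ^ (-k₀))⁻¹ = B₀ * 2 ^ k₀ / ρ x := by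
        rw [Real.rpow_neg (by norm_num : (0:ℝ) ≤ 2), mul_inv, mul_inv, inv_inv, inv_inv]
        ring
      rwa [hre] at h1
    have hnorm : ‖deriv (seg x y) t‖ = dist x y := by
      rw [seg_deriv, ← dist_eq_norm y x, dist_comm]
    rw [Real.norm_eq_abs, abs_of_nonneg (mul_nonneg (inv_nonneg.2 hzx.le) (norm_nonneg _)),
      hnorm, hC]
    calc (ρ z)⁻¹ * dist x y ≤ (B₀ * 2 ^ k₀ / ρ x) * dist x y :=
          mul_le_mul_of_nonneg_right hinv dist_nonneg
      _ = B₀ * 2 ^ k₀ * (dist x y / ρ x) := by ring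
  have hni := intervalIntegral.norm_integral_le_of_norm_le_const hbound
  simp only [sub_zero, abs_one, mul_one] at hni
  exact le_trans (le_abs_self _) ((Real.norm_eq_abs _) ▸ hni)

set_option maxHeartbeats 2000000 in
lemma key_lower_bound {ρ : EuclideanSpace ℝ (Fin d) → ℝ} {B₀ k₀ : ℝ}
    (hB₀ : 1 < B₀) (hk₀ : 1 < k₀) (hρ : IsCRF ρ B₀ k₀)
    (x y : EuclideanSpace ℝ (Fin d)) (γ : ℝ → EuclideanSpace ℝ (Fin d))
    (hγ : ContDiff ℝ 1 γ) (h0 : γ 0 = x) (h1 : γ 1 = y)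
    (hint : IntervalIntegrable (fun t => (ρ (γ t))⁻¹ * ‖deriv γ t‖) volume 0 1) :
    (k₀ + 1) * ((1 + dist x y / ρ x) ^ (1/(k₀+1)) - 1) / B₀ ≤
      ∫ t in (0:ℝ)..1, (ρ (γ t))⁻¹ * ‖deriv γ t‖ := by
  obtain ⟨hρpos, hρbd⟩ := hρ
  have hx : 0 < ρ x := hρpos x
  have hm : (0:ℝ) < k₀ + 1 := by linarith
  set β : ℝ := 1 / (k₀ + 1) with hβ
  have hβpos : 0 < β := by positivity
  have hβle : β ≤ 1 := by rw [hβ, div_le_one hm]; linarith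
  have hexp : β - 1 = -(k₀ / (k₀ + 1)) := by rw [hβ]; field_simp; ring
  have hγc : Continuous γ := hγ.continuous
  have hγ' : Continuous (deriv γ) := hγ.continuous_deriv le_rfl
  have hdγ : ∀ t, HasDerivAt γ (deriv γ t) t :=
    fun t => (hγ.differentiable one_ne_zero).differentiableAt.hasDerivAt
  -- the comparison integrand
  set ψ : ℝ → ℝ := fun t => (1 + dist x (γ t) / ρ x) ^ (β - 1) * ‖deriv γ t‖ with hψ
  have hbase : ∀ t, (1:ℝ) ≤ 1 + dist x (γ t) / ρ x := by
    intro t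
    have := div_nonneg (dist_nonneg (x := x) (y := γ t)) hx.le; linarith
  have hbasepos : ∀ t, (0:ℝ) < 1 + dist x (γ t) / ρ x := fun t => lt_of_lt_of_le one_pos (hbase t)
  have hψc : Continuous ψ := by
    apply Continuous.mul _ hγ'.norm
    apply Continuous.rpow_const
    · exact continuous_const.add ((continuous_const.dist hγc).div_const (ρ x))
    · exact fun t => Or.inl (ne_of_gt (hbasepos t))
  have hψint : IntervalIntegrable ψ volume 0 1 := hψc.intervalIntegrable 0 1
  -- pointwise comparison with the true integrand
  have hpoint : ∀ t ∈ Set.Icc (0:ℝ) 1, B₀⁻¹ * (ρ x)⁻¹ * ψ t ≤ (ρ (γ t))⁻¹ * ‖deriv γ t‖ := by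
    intro t _
    have hup := (hρbd x (γ t)).2
    have hρt : 0 < ρ (γ t) := hρpos (γ t)
    have hVpos : (0:ℝ) < (1 + dist x (γ t) / ρ x) ^ (k₀ / (k₀ + 1)) :=
      Real.rpow_pos_of_pos (hbasepos t) _
    have hupos : (0:ℝ) < B₀ * ρ x * (1 + dist x (γ t) / ρ x) ^ (k₀ / (k₀ + 1)) := by positivity
    have hinv := inv_anti₀ hρt hup
    have hre : (B₀ * ρ x * (1 + dist x (γ t) / ρ x) ^ (k₀ / (k₀ + 1)))⁻¹
        = B₀⁻¹ * (ρ x)⁻¹ * (1 + dist x (γ t) / ρ x) ^ (β - 1) := by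
      rw [hexp, Real.rpow_neg (hbasepos t).le, mul_inv, mul_inv]
    rw [hre] at hinv
    calc B₀⁻¹ * (ρ x)⁻¹ * ψ t
        = (B₀⁻¹ * (ρ x)⁻¹ * (1 + dist x (γ t) / ρ x) ^ (β - 1)) * ‖deriv γ t‖ := by
          rw [hψ]; ring
      _ ≤ (ρ (γ t))⁻¹ * ‖deriv γ t‖ := mul_le_mul_of_nonneg_right hinv (norm_nonneg _)
  have hcmp : B₀⁻¹ * (ρ x)⁻¹ * ∫ t in (0:ℝ)..1, ψ t ≤
      ∫ t in (0:ℝ)..1, (ρ (γ t))⁻¹ * ‖deriv γ t‖ := by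
    rw [← intervalIntegral.integral_const_mul]
    exact intervalIntegral.integral_mono_on (by norm_num)
      ((continuous_const.mul hψc).intervalIntegrable 0 1) hint hpoint
  -- the ε-regularized FTC estimate
  have key : ∀ ε : ℝ, 0 < ε →
      (k₀ + 1) * ρ x * ((1 + dist x y / ρ x) ^ β - 1) ≤ (∫ t in (0:ℝ)..1, ψ t) + ε := by
    intro ε hε
    set q : ℝ → ℝ := (fun t => ε ^ 2 + (inner ℝ (γ t - x) (γ t - x) : ℝ)) with hq
    have hqpos : ∀ t, 0 < q t := fun t =>
      add_pos_of_pos_of_nonneg (pow_pos hε 2) real_inner_self_nonneg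
    set w : ℝ → ℝ := (fun t => Real.sqrt (q t)) with hw
    have hwpos : ∀ t, 0 < w t := fun t => Real.sqrt_pos.2 (hqpos t)
    have hwge : ∀ t, dist x (γ t) ≤ w t := by
      intro t
      rw [dist_comm, dist_eq_norm, hw]
      rw [← Real.sqrt_sq (norm_nonneg (γ t - x))]
      apply Real.sqrt_le_sqrt
      simp only [hq]
      rw [real_inner_self_eq_norm_sq]
      nlinarith [sq_nonneg ε]
    set Dq : ℝ → ℝ := (fun t => (inner ℝ (γ t - x) (deriv γ t) : ℝ)
      + (inner ℝ (deriv γ t) (γ t - x) : ℝ)) with hDq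
    have hqd : ∀ t, HasDerivAt q (Dq t) t := by
      intro t
      have hsub : HasDerivAt (fun s => γ s - x) (deriv γ t) t := (hdγ t).sub_const x
      simpa only [hq, hDq] using (HasDerivAt.inner ℝ hsub hsub).const_add (ε ^ 2)
    have hwd : ∀ t, HasDerivAt w (Dq t / (2 * w t)) t := by
      intro t
      simpa only [hw] using (hqd t).sqrt (ne_of_gt (hqpos t))
    have hDqle : ∀ t, Dq t / (2 * w t) ≤ ‖deriv γ t‖ := by
      intro t
      rw [div_le_iff₀ (by have := hwpos t; positivity)]
      have h3 : ‖γ t - x‖ ≤ w t := by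
        have := hwge t; rwa [dist_comm, dist_eq_norm] at this
      have h1 : Dq t ≤ 2 * (‖γ t - x‖ * ‖deriv γ t‖) := by
        simp only [hDq]
        have ha := abs_real_inner_le_norm (γ t - x) (deriv γ t)
        have hb := abs_real_inner_le_norm (deriv γ t) (γ t - x)
        have hc := le_abs_self ((inner ℝ (γ t - x) (deriv γ t) : ℝ))
        have hd := le_abs_self ((inner ℝ (deriv γ t) (γ t - x) : ℝ))
        nlinarith [norm_nonneg (γ t - x), norm_nonneg (deriv γ t)]
      nlinarith [norm_nonneg (deriv γ t), hwpos t]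
    set Φ : ℝ → ℝ := (fun t => (k₀ + 1) * ρ x * ((1 + w t / ρ x) ^ β - 1)) with hΦ
    have hvpos : ∀ t, (0:ℝ) < 1 + w t / ρ x := by
      intro t; have := (hwpos t); positivity
    set DΦ : ℝ → ℝ := (fun t =>
      (k₀ + 1) * ρ x * (Dq t / (2 * w t) / ρ x * β * (1 + w t / ρ x) ^ (β - 1))) with hDΦ
    have hΦd : ∀ t, HasDerivAt Φ (DΦ t) t := by
      intro t
      have hv : HasDerivAt (fun s => 1 + w s / ρ x) (Dq t / (2 * w t) / ρ x) t :=
        ((hwd t).div_const (ρ x)).const_add 1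
      have hp : HasDerivAt (fun s => (1 + w s / ρ x) ^ β)
          (Dq t / (2 * w t) / ρ x * β * (1 + w t / ρ x) ^ (β - 1)) t :=
        hv.rpow_const (Or.inl (ne_of_gt (hvpos t)))
      simpa only [hΦ, hDΦ] using (hp.sub_const 1).const_mul ((k₀ + 1) * ρ x)
    have hqc : Continuous q := by
      apply continuous_const.add
      exact Continuous.inner (hγc.sub continuous_const) (hγc.sub continuous_const)
    have hwc : Continuous w := Real.continuous_sqrt.comp hqc
    have hDqc : Continuous Dq := by
      apply Continuous.add
      · exact Continuous.inner (hγc.sub continuous_const) hγ'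
      · exact Continuous.inner hγ' (hγc.sub continuous_const)
    have hDΦc : Continuous DΦ := by
      apply continuous_const.mul
      apply Continuous.mul
      · apply Continuous.mul
        · exact ((hDqc.div (continuous_const.mul hwc) (fun t => by
            have := hwpos t; exact mul_ne_zero two_ne_zero this.ne')).div_const (ρ x))
        · exact continuous_const
      · apply Continuous.rpow_const
        · exact continuous_const.add (hwc.div_const (ρ x))
        · exact fun t => Or.inl (ne_of_gt (hvpos t))
    have hftc : ∫ t in (0:ℝ)..1, DΦ t = Φ 1 - Φ 0 :=
      intervalIntegral.integral_eq_sub_of_hasDerivAt (fun t _ => hΦd t)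
        (hDΦc.intervalIntegrable 0 1)
    have hDΦle : ∀ t ∈ Set.Icc (0:ℝ) 1, DΦ t ≤ ψ t := by
      intro t _
      have he1 : DΦ t = (1 + w t / ρ x) ^ (β - 1) * (Dq t / (2 * w t)) := by
        have hk1 : (k₀ + 1) * β = 1 := by rw [hβ]; field_simp
        simp only [hDΦ]
        have e : (k₀ + 1) * ρ x * (Dq t / (2 * w t) / ρ x * β * ((1 + w t / ρ x) ^ (β - 1)))
            = ((k₀ + 1) * β) * (ρ x * (ρ x)⁻¹)
              * (((1 + w t / ρ x) ^ (β - 1)) * (Dq t / (2 * w t))) := by ring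
        rw [e, hk1, mul_inv_cancel₀ hx.ne', one_mul, one_mul]
      have hV2pos : (0:ℝ) < (1 + w t / ρ x) ^ (β - 1) := Real.rpow_pos_of_pos (hvpos t) _
      have hVle : (1 + w t / ρ x) ^ (β - 1) ≤ (1 + dist x (γ t) / ρ x) ^ (β - 1) := by
        apply Real.rpow_le_rpow_of_nonpos (hbasepos t)
        · have h5 := hwge t
          gcongr
        · linarith
      calc DΦ t = (1 + w t / ρ x) ^ (β - 1) * (Dq t / (2 * w t)) := he1
        _ ≤ (1 + w t / ρ x) ^ (β - 1) * ‖deriv γ t‖ :=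
            mul_le_mul_of_nonneg_left (hDqle t) hV2pos.le
        _ ≤ (1 + dist x (γ t) / ρ x) ^ (β - 1) * ‖deriv γ t‖ :=
            mul_le_mul_of_nonneg_right hVle (norm_nonneg _)
        _ = ψ t := rfl
    have hmono : ∫ t in (0:ℝ)..1, DΦ t ≤ ∫ t in (0:ℝ)..1, ψ t :=
      intervalIntegral.integral_mono_on (by norm_num) (hDΦc.intervalIntegrable 0 1)
        hψint hDΦle
    have h9 : Φ 1 - Φ 0 ≤ ∫ t in (0:ℝ)..1, ψ t := by rw [← hftc]; exact hmono
    have hw1 : dist x y ≤ w 1 := by have := hwge 1; rwa [h1] at this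
    have hΦ1 : (k₀ + 1) * ρ x * ((1 + dist x y / ρ x) ^ β - 1) ≤ Φ 1 := by
      simp only [hΦ]
      have hle : (1 + dist x y / ρ x) ^ β ≤ (1 + w 1 / ρ x) ^ β := by
        apply Real.rpow_le_rpow
          (by have := dist_nonneg (x := x) (y := y); positivity) (by gcongr) hβpos.le
      have hc : (0:ℝ) ≤ (k₀ + 1) * ρ x := by positivity
      nlinarith [mul_nonneg hc (sub_nonneg.2 hle)]
    have hw0 : w 0 = ε := by
      simp only [hw, hq, h0, sub_self, inner_zero_left]
      rw [add_zero, Real.sqrt_sq hε.le]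
    have hΦ0 : Φ 0 ≤ ε := by
      simp only [hΦ, hw0]
      have hber : (1 + ε / ρ x) ^ β ≤ 1 + β * (ε / ρ x) :=
        rpow_one_add_le_one_add_mul_self
          (by have h := div_nonneg hε.le hx.le; linarith) hβpos.le hβle
      have hc : (0:ℝ) ≤ (k₀ + 1) * ρ x := by positivity
      have h7 : (k₀ + 1) * ρ x * ((1 + ε / ρ x) ^ β - 1) ≤ (k₀ + 1) * ρ x * (β * (ε / ρ x)) := by
        nlinarith [mul_nonneg hc (sub_nonneg.2 hber)]
      refine h7.trans (le_of_eq ?_)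
      rw [hβ]
      have hxne := hx.ne'
      have hmne : k₀ + 1 ≠ 0 := hm.ne'
      field_simp
    linarith
  have hF : (k₀ + 1) * ρ x * ((1 + dist x y / ρ x) ^ β - 1) ≤ ∫ t in (0:ℝ)..1, ψ t :=
    le_of_forall_pos_le_add (fun ε hε => key ε hε)
  calc (k₀ + 1) * ((1 + dist x y / ρ x) ^ (1/(k₀+1)) - 1) / B₀
      = B₀⁻¹ * (ρ x)⁻¹ * ((k₀ + 1) * ρ x * ((1 + dist x y / ρ x) ^ β - 1)) := by
        rw [hβ]
        have hxne := hx.ne'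
        have hBne : B₀ ≠ 0 := by positivity
        field_simp
    _ ≤ B₀⁻¹ * (ρ x)⁻¹ * ∫ t in (0:ℝ)..1, ψ t :=
        mul_le_mul_of_nonneg_left hF (by positivity)
    _ ≤ _ := hcmp

lemma bernoulli_aux {u m : ℝ} (hu : 0 ≤ u) (hm : 1 ≤ m) :
    (1 + u) ^ m - 1 ≤ m * u * (1 + u) ^ m := by
  have h1u : (0:ℝ) < 1 + u := by linarith
  have hdiv : u / (1 + u) ≤ 1 := by rw [div_le_one h1u]; linarith
  have hdiv0 : 0 ≤ u / (1 + u) := div_nonneg hu h1u.le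
  have hz1 : (-1:ℝ) ≤ -(u / (1 + u)) := by linarith
  have hber := one_add_mul_self_le_rpow_one_add hz1 hm
  have hzz : 1 + -(u / (1 + u)) = (1 + u)⁻¹ := by field_simp; ring
  rw [hzz, Real.inv_rpow h1u.le] at hber
  have hA : (0:ℝ) < (1 + u) ^ m := Real.rpow_pos_of_pos h1u m
  have h2 : (1 + u) ^ m * (1 + m * -(u / (1 + u))) ≤ (1 + u) ^ m * ((1 + u) ^ m)⁻¹ :=
    mul_le_mul_of_nonneg_left hber hA.le
  rw [mul_inv_cancel₀ hA.ne'] at h2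
  have h3 : (1 + u) ^ m * (m * (u / (1 + u))) ≤ (1 + u) ^ m * (m * u) := by
    apply mul_le_mul_of_nonneg_left _ hA.le
    apply mul_le_mul_of_nonneg_left _ (by linarith)
    rw [div_le_iff₀ h1u]; nlinarith
  nlinarith [h2, h3]

lemma agmonDist_lt_of_far {ρ : EuclideanSpace ℝ (Fin d) → ℝ} {B₀ k₀ : ℝ}
    (hB₀ : 1 < B₀) (hk₀ : 1 < k₀) (hρ : IsCRF ρ B₀ k₀)
    (x y : EuclideanSpace ℝ (Fin d)) (r : ℝ) (hr : 0 < r)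
    (hfar : ((1 + 2 * B₀ * r) ^ (k₀ + 1) - 1) * ρ x ≤ dist x y)
    (hlt : agmonDist ρ x y < 2 * r) : agmonDist ρ x y < r := by
  have hρpos := hρ.1
  have hx : 0 < ρ x := hρpos x
  have hBpos : (0:ℝ) < B₀ := by linarith
  have hmpos : (0:ℝ) < k₀ + 1 := by linarith
  rw [agmonDist_def] at hlt ⊢
  obtain ⟨L, hL, hL2⟩ := exists_lt_of_csInf_lt (agmonSet_nonempty ρ x y) hlt
  obtain ⟨γ, hγ, h0, h1, rfl⟩ := hL
  by_cases hint : IntervalIntegrable (fun t => (ρ (γ t))⁻¹ * ‖deriv γ t‖) volume 0 1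
  · exfalso
    have hkey := key_lower_bound hB₀ hk₀ hρ x y γ hγ h0 h1 hint
    have hb0 : (0:ℝ) < 1 + 2 * B₀ * r := by positivity
    have hs : (1 + 2 * B₀ * r) ^ (k₀ + 1) ≤ 1 + dist x y / ρ x := by
      have := (le_div_iff₀ hx).2 hfar
      linarith
    have hpow : 1 + 2 * B₀ * r ≤ (1 + dist x y / ρ x) ^ (1 / (k₀ + 1)) := by
      have hbase0 : (0:ℝ) ≤ (1 + 2 * B₀ * r) ^ (k₀ + 1) :=
        (Real.rpow_pos_of_pos hb0 _).le
      have h2 : ((1 + 2 * B₀ * r) ^ (k₀ + 1)) ^ (1 / (k₀ + 1))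
          ≤ (1 + dist x y / ρ x) ^ (1 / (k₀ + 1)) :=
        Real.rpow_le_rpow hbase0 hs (by positivity)
      rwa [← Real.rpow_mul hb0.le, mul_one_div, div_self hmpos.ne', Real.rpow_one] at h2
    have hfin : 2 * r ≤ (k₀ + 1) * ((1 + dist x y / ρ x) ^ (1 / (k₀ + 1)) - 1) / B₀ := by
      rw [le_div_iff₀ hBpos]
      have h4 : 2 * B₀ * r ≤ (1 + dist x y / ρ x) ^ (1 / (k₀ + 1)) - 1 := by linarith
      have h5 : (0:ℝ) ≤ k₀ * ((1 + dist x y / ρ x) ^ (1 / (k₀ + 1)) - 1) :=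
        mul_nonneg (by linarith) (by nlinarith)
      nlinarith [h4, h5]
    linarith
  · have h0mem : (0:ℝ) ∈ agmonSet ρ x y :=
      ⟨γ, hγ, h0, h1, (intervalIntegral.integral_undef hint).symm⟩
    have := csInf_le (agmonSet_bddBelow hρpos x y) h0mem
    linarith

end AgmonAux

open AgmonAux

set_option maxHeartbeats 2000000 in
theorem stmt4 {d : ℕ} (ρ : EuclideanSpace ℝ (Fin d) → ℝ) (B₀ k₀ : ℝ)
    (hB₀ : 1 < B₀) (hk₀ : 1 < k₀) (hρ : IsCRF ρ B₀ k₀) :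
    ∃ C : ℝ, 0 < C ∧ ∀ (x : EuclideanSpace ℝ (Fin d)) (r : ℝ), 0 < r →
      volume (agmonBall ρ x (2 * r)) ≤
        ENNReal.ofReal (C * (1 + r) ^ ((k₀ + 1) * d)) * volume (agmonBall ρ x r) := by
  have hρpos := hρ.1
  have hBpos : (0:ℝ) < B₀ := by linarith
  have hmpos : (0:ℝ) < k₀ + 1 := by linarith
  have h2k : (0:ℝ) < 2 ^ k₀ := Real.rpow_pos_of_pos (by norm_num) _
  have h2k2 : (2:ℝ) ≤ 2 ^ k₀ := by
    calc (2:ℝ) = 2 ^ (1:ℝ) := (Real.rpow_one 2).symm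
      _ ≤ 2 ^ k₀ := Real.rpow_le_rpow_of_exponent_le one_le_two hk₀.le
  set M : ℝ := B₀ * 2 ^ k₀ with hM
  have hM2 : (2:ℝ) ≤ M := by nlinarith
  have hMpos : (0:ℝ) < M := by linarith
  set K : ℝ := 2 * (k₀ + 1) * B₀ * (1 + 2 * B₀) ^ (k₀ + 1) with hK
  have hKpos : 0 < K := by positivity
  refine ⟨(2 * M * K) ^ d + 1, by positivity, ?_⟩
  intro x r hr
  have hx : 0 < ρ x := hρpos x
  have hr1 : (1:ℝ) ≤ 1 + r := by linarith
  have hrpow1 : (1:ℝ) ≤ (1 + r) ^ ((k₀ + 1) * (d:ℝ)) :=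
    Real.one_le_rpow hr1 (by positivity)
  -- x belongs to the small agmon ball
  have hrm : 0 < min r 1 := lt_min hr one_pos
  have hrm1 : min r 1 ≤ 1 := min_le_right _ _
  have hrmr : min r 1 ≤ r := min_le_left _ _
  have hsmall : ball x (min r 1 * ρ x / (2 * M)) ⊆ agmonBall ρ x r := by
    intro y hy
    rw [mem_ball, dist_comm] at hy
    have hsle : min r 1 * ρ x / (2 * M) ≤ ρ x := by
      rw [div_le_iff₀ (by positivity)]
      nlinarith
    have hdxy : dist x y ≤ ρ x := le_trans hy.le hsle
    have h5 := agmonDist_le_of_close hB₀ hk₀ hρ x y hdxy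
    have h6 : M * (dist x y / ρ x) < M * (min r 1 / (2 * M)) := by
      apply mul_lt_mul_of_pos_left _ hMpos
      rw [div_lt_div_iff₀ hx (by positivity : (0:ℝ) < 2 * M)]
      calc dist x y * (2 * M) < min r 1 * ρ x / (2 * M) * (2 * M) := by
            apply mul_lt_mul_of_pos_right hy (by positivity)
        _ = min r 1 * ρ x := by field_simp
      
    have h7 : M * (min r 1 / (2 * M)) = min r 1 / 2 := by field_simp
    show agmonDist ρ x y < r
    rw [← hM] at h5
    calc agmonDist ρ x y ≤ M * (dist x y / ρ x) := h5
      _ < M * (min r 1 / (2 * M)) := h6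
      _ = min r 1 / 2 := h7
      _ < r := by rcases min_le_left r 1 with _; nlinarith [hrm, hrmr]
  -- the big inclusion
  set R : ℝ := (1 + 2 * B₀ * r) ^ (k₀ + 1) - 1 with hR
  have hRpos : 0 < R := by
    rw [hR, sub_pos]
    exact (Real.one_lt_rpow_iff_of_pos (by positivity)).2 (Or.inl ⟨by nlinarith, hmpos⟩)
  have hbig : agmonBall ρ x (2 * r) ⊆ ball x (R * ρ x) ∪ agmonBall ρ x r := by
    intro y hy
    by_cases hyb : y ∈ ball x (R * ρ x)
    · exact Or.inl hyb
    · right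
      rw [mem_ball, not_lt] at hyb
      rw [dist_comm] at hyb
      exact agmonDist_lt_of_far hB₀ hk₀ hρ x y r hr (by rw [← hR]; exact hyb) hy
  -- the key real bound : R ≤ K * min r 1 * (1+r)^(k₀+1)
  have hRbound : R ≤ K * min r 1 * (1 + r) ^ (k₀ + 1) := by
    have hfac : (1 + 2 * B₀ * r) ^ (k₀ + 1) ≤ (1 + 2 * B₀) ^ (k₀ + 1) * (1 + r) ^ (k₀ + 1) := by
      rw [← Real.mul_rpow (by positivity) (by positivity)]
      apply Real.rpow_le_rpow (by positivity) (by nlinarith) hmpos.le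
    have hpow1r : (0:ℝ) < (1 + r) ^ (k₀ + 1) := Real.rpow_pos_of_pos (by linarith) _
    have hpowB : (0:ℝ) < (1 + 2 * B₀) ^ (k₀ + 1) := Real.rpow_pos_of_pos (by positivity) _
    rcases le_or_gt r 1 with hcase | hcase
    · have hmin : min r 1 = r := min_eq_left hcase
      have hber := bernoulli_aux (u := 2 * B₀ * r) (by positivity) (by linarith : 1 ≤ k₀ + 1)
      rw [hR, hK, hmin]
      nlinarith [hber, hfac, Real.rpow_pos_of_pos (show (0:ℝ) < 1 + 2*B₀*r by positivity) (k₀+1)]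
    · have hmin : min r 1 = 1 := min_eq_right hcase.le
      rw [hR, hK, hmin]
      have h8 : (1:ℝ) ≤ 2 * (k₀ + 1) * B₀ := by nlinarith
      nlinarith [hfac, hpowB, hpow1r]
  -- d = 0 case
  rcases Nat.eq_zero_or_pos d with hd | hd
  · subst hd
    have hxball : x ∈ agmonBall ρ x r := by
      have h5 := agmonDist_le_of_close hB₀ hk₀ hρ x x (by simp [hx.le])
      show agmonDist ρ x x < r
      simp only [dist_self, zero_div, mul_zero] at h5
      linarith
    have huniv : agmonBall ρ x r = Set.univ := by
      apply Set.eq_univ_of_forall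
      intro y
      have : y = x := Subsingleton.elim y x
      rw [this]; exact hxball
    have hC1 : (1:ENNReal) ≤ ENNReal.ofReal (((2 * M * K) ^ (0:ℕ) + 1) * (1 + r) ^ ((k₀ + 1) * ((0:ℕ):ℝ))) := by
      simp only [pow_zero, Nat.cast_zero, mul_zero, Real.rpow_zero, mul_one]
      rw [show ((1:ℝ) + 1) = 2 by norm_num]
      rw [← ENNReal.ofReal_one]
      exact ENNReal.ofReal_le_ofReal (by norm_num)
    calc volume (agmonBall ρ x (2 * r)) ≤ volume (Set.univ : Set (EuclideanSpace ℝ (Fin 0))) :=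
          measure_mono (Set.subset_univ _)
      _ = volume (agmonBall ρ x r) := by rw [huniv]
      _ = 1 * volume (agmonBall ρ x r) := (one_mul _).symm
      _ ≤ _ := mul_le_mul_left hC1 _
  -- main case d ≥ 1
  haveI : Nontrivial (EuclideanSpace ℝ (Fin d)) :=
    Module.nontrivial_of_finrank_pos (R := ℝ) (by rw [finrank_euclideanSpace_fin]; exact hd)
  have hfr : Module.finrank ℝ (EuclideanSpace ℝ (Fin d)) = d := finrank_euclideanSpace_fin
  have hvol_big : volume (ball x (R * ρ x)) =
      ENNReal.ofReal ((R * ρ x) ^ d) * volume (ball (0 : EuclideanSpace ℝ (Fin d)) 1) := by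
    rw [Measure.addHaar_ball volume x (by positivity : (0:ℝ) ≤ R * ρ x), hfr]
  have hvol_small : volume (ball x (min r 1 * ρ x / (2 * M))) =
      ENNReal.ofReal ((min r 1 * ρ x / (2 * M)) ^ d) *
        volume (ball (0 : EuclideanSpace ℝ (Fin d)) 1) := by
    rw [Measure.addHaar_ball volume x (by positivity : (0:ℝ) ≤ min r 1 * ρ x / (2 * M)), hfr]
  set Q : ℝ := (2 * M * K) ^ d * (1 + r) ^ ((k₀ + 1) * (d:ℝ)) with hQ
  have hQ0 : 0 ≤ Q := by positivity
  have hkeyreal : (R * ρ x) ^ d ≤ Q * (min r 1 * ρ x / (2 * M)) ^ d := by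
    have h9 : R * ρ x ≤ (2 * M * K * (1 + r) ^ (k₀ + 1)) * (min r 1 * ρ x / (2 * M)) := by
      have he : (2 * M * K * (1 + r) ^ (k₀ + 1)) * (min r 1 * ρ x / (2 * M))
          = (K * min r 1 * (1 + r) ^ (k₀ + 1)) * ρ x := by
        field_simp
      rw [he]
      exact mul_le_mul_of_nonneg_right hRbound hx.le
    calc (R * ρ x) ^ d ≤ ((2 * M * K * (1 + r) ^ (k₀ + 1)) * (min r 1 * ρ x / (2 * M))) ^ d :=
          pow_le_pow_left₀ (by positivity) h9 d
      _ = (2 * M * K) ^ d * ((1 + r) ^ (k₀ + 1)) ^ d * (min r 1 * ρ x / (2 * M)) ^ d := by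
          rw [mul_pow, mul_pow]
      _ = Q * (min r 1 * ρ x / (2 * M)) ^ d := by
          rw [hQ, ← Real.rpow_natCast ((1 + r) ^ (k₀ + 1)) d, ← Real.rpow_mul (by linarith)]
  have hvb : volume (ball x (R * ρ x)) ≤ ENNReal.ofReal Q * volume (agmonBall ρ x r) := by
    rw [hvol_big]
    calc ENNReal.ofReal ((R * ρ x) ^ d) * volume (ball (0 : EuclideanSpace ℝ (Fin d)) 1)
        ≤ ENNReal.ofReal (Q * (min r 1 * ρ x / (2 * M)) ^ d) *
            volume (ball (0 : EuclideanSpace ℝ (Fin d)) 1) :=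
          mul_le_mul_left (ENNReal.ofReal_le_ofReal hkeyreal) _
      _ = ENNReal.ofReal Q * volume (ball x (min r 1 * ρ x / (2 * M))) := by
          rw [hvol_small, ENNReal.ofReal_mul hQ0, mul_assoc]
      _ ≤ ENNReal.ofReal Q * volume (agmonBall ρ x r) :=
          mul_le_mul_right (measure_mono hsmall) _
  calc volume (agmonBall ρ x (2 * r))
      ≤ volume (ball x (R * ρ x) ∪ agmonBall ρ x r) := measure_mono hbig
    _ ≤ volume (ball x (R * ρ x)) + volume (agmonBall ρ x r) := measure_union_le _ _
    _ ≤ ENNReal.ofReal Q * volume (agmonBall ρ x r) + 1 * volume (agmonBall ρ x r) := by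
        rw [one_mul]; exact add_le_add_left hvb _
    _ = (ENNReal.ofReal Q + 1) * volume (agmonBall ρ x r) := by rw [add_mul, one_mul]
    _ ≤ ENNReal.ofReal (((2 * M * K) ^ d + 1) * (1 + r) ^ ((k₀ + 1) * (d:ℝ))) *
          volume (agmonBall ρ x r) := by
        apply mul_le_mul_left
        rw [← ENNReal.ofReal_one, ← ENNReal.ofReal_add hQ0 zero_le_one]
        apply ENNReal.ofReal_le_ofReal
        rw [hQ]
        nlinarith [hrpow1, pow_nonneg (by positivity : (0:ℝ) ≤ 2 * M * K) d]
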